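/- Let q ≥ 3 be a prime power and m ≥ 1 an integer. Write q - 1 = m·t₁ + t₂ with t₁ ≥ 0 and 0 ≤ t₂ < m, and define S = Σ_{t=1}^{q-1} q^(⌈mt/(q-1)⌉ - 1) with q-adic expansion S = Σ_{i=0}^{m-1} a_i·q^i. If t₂ = 0 then a_i = (q-1)/m for all i ∈ [0, m-1]. If t₂ ≠ 0, let Υ = {⌈mγ/t₂⌉ - 1 : γ = 1, 2, ..., t₂} (using the convention ⌈x - 1⌉ = ⌈x⌉ - 1 for the paper's ⌈mγ/t₂ - 1⌉). Then a_i = ⌈(q-1)/m⌉ for i ∈ Υ, a_i = ⌊(q-1)/m⌋ for i ∈ [0, m-1] \ Υ, and Σ_{i=0}^{m-1} a_i = q - 1. -/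

import Mathlib

private theorem ceil_succ_iff' {a b k : ℕ} (hb : 0 < b) (ha : 0 < a) :
    (a + b - 1) / b = k + 1 ↔ b * k < a ∧ a ≤ b * (k + 1) := by
  obtain ⟨c, rfl⟩ : ∃ c, a = c + 1 := ⟨a - 1, by omega⟩
  have he : c + 1 + b - 1 = c + b := by omega
  rw [he]
  constructor
  · intro h
    have h1 : (k + 1) * b ≤ c + b := by rw [← Nat.le_div_iff_mul_le hb, h]
    have h2 : c + b < (k + 2) * b := by rw [← Nat.div_lt_iff_lt_mul hb, h]; omega
    constructor <;> nlinarith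
  · rintro ⟨h1, h2⟩
    have hle : k + 1 ≤ (c + b) / b := by
      rw [Nat.le_div_iff_mul_le hb]; nlinarith
    have hlt : (c + b) / b < k + 2 := by
      rw [Nat.div_lt_iff_lt_mul hb]; nlinarith
    omega

private theorem sum_lt_pow_aux' (q : ℕ) (a : ℕ → ℕ) :
    ∀ j, (∀ i < j, a i < q) → (∑ i ∈ Finset.range j, a i * q ^ i) < q ^ j := by
  intro j
  induction j with
  | zero => simp
  | succ k ih =>
    intro h
    rw [Finset.sum_range_succ]
    have h1 : (∑ i ∈ Finset.range k, a i * q ^ i) < q ^ k := ih (fun i hi => h i (by omega))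
    have h2 : a k + 1 ≤ q := h k (by omega)
    calc (∑ i ∈ Finset.range k, a i * q ^ i) + a k * q ^ k
        < q ^ k + a k * q ^ k := by omega
      _ = (a k + 1) * q ^ k := by ring
      _ ≤ q * q ^ k := Nat.mul_le_mul_right _ h2
      _ = q ^ (k + 1) := by ring

private theorem digit_extract' (q : ℕ) (hq : 1 ≤ q) (a : ℕ → ℕ) (m j : ℕ) (hj : j < m)
    (ha : ∀ i < m, a i < q) :
    ((∑ i ∈ Finset.range m, a i * q ^ i) / q ^ j) % q = a j := by
  have hL : (∑ i ∈ Finset.range j, a i * q ^ i) < q ^ j :=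
    sum_lt_pow_aux' q a j (fun i hi => ha i (by omega))
  have hsplit : (∑ i ∈ Finset.range m, a i * q ^ i) =
      (∑ i ∈ Finset.range j, a i * q ^ i) + (∑ i ∈ Finset.Ico j m, a i * q ^ i) := by
    rw [Finset.range_eq_Ico,
      ← Finset.sum_Ico_consecutive (fun i => a i * q ^ i) (Nat.zero_le j) (le_of_lt hj), ← Finset.range_eq_Ico]
  obtain ⟨k, hk⟩ : ∃ k, m - j = k + 1 := ⟨m - j - 1, by omega⟩
  have hIco : (∑ i ∈ Finset.Ico j m, a i * q ^ i) =
      q ^ j * (a j + q * ∑ i ∈ Finset.range k, a (j + 1 + i) * q ^ i) := by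
    rw [Finset.sum_Ico_eq_sum_range, hk, Finset.sum_range_succ']
    have h1 : ∀ i, a (j + (i + 1)) * q ^ (j + (i + 1)) =
        q ^ j * (q * (a (j + 1 + i) * q ^ i)) := by
      intro i
      have he : j + (i + 1) = j + 1 + i := by omega
      rw [he, pow_add, pow_succ]; ring
    simp only [h1, ← Finset.mul_sum, Nat.add_zero]
    ring
  rw [hsplit, hIco, Nat.add_mul_div_left _ _ (by positivity), Nat.div_eq_of_lt hL, zero_add,
    Nat.add_mul_mod_self_left, Nat.mod_eq_of_lt (ha j hj)]

private theorem telescope_aux' (f : ℕ → ℕ) (hf : Monotone f) (n : ℕ) :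
    (∑ i ∈ Finset.range n, (f (i + 1) - f i)) = f n - f 0 := by
  induction n with
  | zero => simp
  | succ k ih =>
    rw [Finset.sum_range_succ, ih]
    have h1 : f 0 ≤ f k := hf (Nat.zero_le k)
    have h2 : f k ≤ f (k + 1) := hf (by omega)
    omega

theorem stmt_13 (q m t₁ t₂ : ℕ) (hq : IsPrimePow q) (hq3 : 3 ≤ q) (hm : 1 ≤ m)
    (hdecomp : q - 1 = m * t₁ + t₂) (ht₂ : t₂ < m) :
    (t₂ = 0 →
      ∀ i < m,
        ((∑ t ∈ Finset.Icc 1 (q - 1), q ^ ((m * t + q - 2) / (q - 1) - 1)) / q ^ i) % q =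
          (q - 1) / m) ∧
    (t₂ ≠ 0 →
      (∀ i < m, (∃ γ : ℕ, 1 ≤ γ ∧ γ ≤ t₂ ∧ i = (m * γ + t₂ - 1) / t₂ - 1) →
          ((∑ t ∈ Finset.Icc 1 (q - 1), q ^ ((m * t + q - 2) / (q - 1) - 1)) / q ^ i) % q =
            (q - 1 + m - 1) / m) ∧
      (∀ i < m, ¬ (∃ γ : ℕ, 1 ≤ γ ∧ γ ≤ t₂ ∧ i = (m * γ + t₂ - 1) / t₂ - 1) →
          ((∑ t ∈ Finset.Icc 1 (q - 1), q ^ ((m * t + q - 2) / (q - 1) - 1)) / q ^ i) % q =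
            (q - 1) / m) ∧
      (∑ i ∈ Finset.range m,
          ((∑ t ∈ Finset.Icc 1 (q - 1), q ^ ((m * t + q - 2) / (q - 1) - 1)) / q ^ i) % q) =
        q - 1) := by
  have hm0 : 0 < m := hm
  set N := q - 1 with hNdef
  have hN0 : 0 < N := by omega
  have hN2 : 2 ≤ N := by omega
  set a : ℕ → ℕ := fun i => N * (i + 1) / m - N * i / m with ha_def
  have hmonoN : Monotone (fun i => N * i / m) := fun x y hxy =>
    Nat.div_le_div_right (Nat.mul_le_mul_left _ hxy)
  -- Step 1: the sum equals ∑ a i * q ^ i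
  have hS : (∑ t ∈ Finset.Icc 1 N, q ^ ((m * t + q - 2) / N - 1)) =
      ∑ i ∈ Finset.range m, a i * q ^ i := by
    have hmaps : ∀ t ∈ Finset.Icc 1 N, ((m * t + q - 2) / N - 1) ∈ Finset.range m := by
      intro t ht
      rw [Finset.mem_Icc] at ht
      rw [Finset.mem_range]
      have h1 : (m * t + q - 2) / N < m + 1 := by
        rw [Nat.div_lt_iff_lt_mul hN0]
        have h2 : m * t ≤ m * N := Nat.mul_le_mul_left m ht.2
        have h3 : (m + 1) * N = m * N + N := by ring
        omega
      omega
    rw [← Finset.sum_fiberwise_of_maps_to' hmaps (fun j => q ^ j)]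
    apply Finset.sum_congr rfl
    intro j hj
    rw [Finset.mem_range] at hj
    rw [Finset.sum_const, smul_eq_mul]
    congr 1
    have hset : {t ∈ Finset.Icc 1 N | (m * t + q - 2) / N - 1 = j} =
        Finset.Icc (N * j / m + 1) (N * (j + 1) / m) := by
      ext t
      simp only [Finset.mem_filter, Finset.mem_Icc]
      constructor
      · rintro ⟨⟨ht1, htN⟩, hft⟩
        have hmt : 1 ≤ m * t := Nat.mul_pos hm0 ht1
        have hq2 : m * t + q - 2 = m * t + N - 1 := by omega
        rw [hq2] at hft
        have hge1 : 1 ≤ (m * t + N - 1) / N := by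
          rw [Nat.one_le_div_iff hN0]; omega
        have hceil : (m * t + N - 1) / N = j + 1 := by omega
        rw [ceil_succ_iff' hN0 hmt] at hceil
        obtain ⟨hc1, hc2⟩ := hceil
        constructor
        · have hlt : N * j / m < t := by
            rw [Nat.div_lt_iff_lt_mul hm0, mul_comm t m]; exact hc1
          omega
        · rw [Nat.le_div_iff_mul_le hm0, mul_comm t m]; exact hc2
      · rintro ⟨h1, h2⟩
        have hc1 : N * j < m * t := by
          have hlt : N * j / m < t := by omega
          rw [Nat.div_lt_iff_lt_mul hm0, mul_comm t m] at hlt; exact hlt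
        have hc2 : m * t ≤ N * (j + 1) := by
          rw [Nat.le_div_iff_mul_le hm0, mul_comm t m] at h2; exact h2
        have ht1 : 1 ≤ t := by
          rcases Nat.eq_zero_or_pos t with h | h
          · subst h; simp at hc1
          · exact h
        have htN : t ≤ N := by
          have h3 : m * t ≤ m * N := by
            calc m * t ≤ N * (j + 1) := hc2
              _ ≤ N * m := Nat.mul_le_mul_left N (by omega)
              _ = m * N := mul_comm N m
          exact Nat.le_of_mul_le_mul_left h3 hm0
        have hmt : 1 ≤ m * t := Nat.mul_pos hm0 ht1
        have hq2 : m * t + q - 2 = m * t + N - 1 := by omega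
        have hceil : (m * t + N - 1) / N = j + 1 := by
          rw [ceil_succ_iff' hN0 hmt]; exact ⟨hc1, hc2⟩
        refine ⟨⟨ht1, htN⟩, ?_⟩
        simp [hq2, hceil]
    rw [hset, Nat.card_Icc]
    have hmn := hmonoN (show j ≤ j + 1 by omega)
    simp only [ha_def]
    simp only at hmn
    omega
  -- Step 2: values of a
  have hNi : ∀ i : ℕ, N * i / m = t₁ * i + t₂ * i / m := by
    intro i
    have he : N * i = t₂ * i + m * (t₁ * i) := by rw [hdecomp]; ring
    rw [he, Nat.add_mul_div_left _ _ hm0, add_comm]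
  have hmono2 : ∀ i : ℕ, t₂ * i / m ≤ t₂ * (i + 1) / m :=
    fun i => Nat.div_le_div_right (Nat.mul_le_mul_left _ (by omega))
  have hstep : ∀ i : ℕ, t₂ * (i + 1) / m ≤ t₂ * i / m + 1 := by
    intro i
    have h1 : t₂ * (i + 1) ≤ t₂ * i + m := by nlinarith
    calc t₂ * (i + 1) / m ≤ (t₂ * i + m) / m := Nat.div_le_div_right h1
      _ = t₂ * i / m + 1 := Nat.add_div_right _ hm0
  have haval : ∀ i : ℕ, a i = t₁ + (t₂ * (i + 1) / m - t₂ * i / m) := by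
    intro i
    simp only [ha_def]
    rw [hNi, hNi]
    have h1 := hmono2 i
    have h2 : t₁ * (i + 1) = t₁ * i + t₁ := by ring
    omega
  have ha_lt : ∀ i, i < m → a i < q := by
    intro i hi
    rw [haval i]
    have h3 : t₁ ≤ m * t₁ := Nat.le_mul_of_pos_left _ hm0
    rcases Nat.eq_zero_or_pos t₂ with h0 | h0
    · subst h0
      simp only [Nat.zero_mul, Nat.zero_div]
      omega
    · have hm2 : 2 ≤ m := by omega
      have h4 : 2 * t₁ ≤ m * t₁ := Nat.mul_le_mul_right _ hm2
      have h2 := hstep i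
      have h2' := hmono2 i
      omega
  have hdig : ∀ i, i < m →
      ((∑ t ∈ Finset.Icc 1 N, q ^ ((m * t + q - 2) / N - 1)) / q ^ i) % q = a i := by
    intro i hi
    rw [hS]
    exact digit_extract' q (by omega) a m i hi ha_lt
  have hfloor : N / m = t₁ + t₂ / m := by rw [hdecomp, Nat.mul_add_div hm0]
  have hfloor' : N / m = t₁ := by rw [hfloor, Nat.div_eq_of_lt ht₂, add_zero]
  constructor
  · -- t₂ = 0 case
    intro h0 i hi
    rw [hdig i hi, haval i, h0]
    simp only [Nat.zero_mul, Nat.zero_div, Nat.sub_zero, Nat.add_zero]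
    omega
  · intro ht₂0
    have ht₂pos : 0 < t₂ := by omega
    refine ⟨?_, ?_, ?_⟩
    · -- i ∈ Υ
      rintro i hi ⟨γ, hγ1, hγ2, hγi⟩
      have hmγ : 1 ≤ m * γ := Nat.mul_pos hm0 hγ1
      have hge1 : 1 ≤ (m * γ + t₂ - 1) / t₂ := by
        rw [Nat.one_le_div_iff ht₂pos]; omega
      have hceil : (m * γ + t₂ - 1) / t₂ = i + 1 := by omega
      rw [ceil_succ_iff' ht₂pos hmγ] at hceil
      obtain ⟨hc1, hc2⟩ := hceil
      have hd1 : γ ≤ t₂ * (i + 1) / m := by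
        rw [Nat.le_div_iff_mul_le hm0, mul_comm γ m]; exact hc2
      have hd2 : t₂ * i / m < γ := by
        rw [Nat.div_lt_iff_lt_mul hm0, mul_comm γ m]; exact hc1
      have hRHS : (N + m - 1) / m = t₁ + 1 := by
        have he : N + m - 1 = m * (t₁ + 1) + (t₂ - 1) := by
          have h1 : m * (t₁ + 1) = m * t₁ + m := by ring
          omega
        rw [he, Nat.mul_add_div hm0, Nat.div_eq_of_lt (by omega), add_zero]
      rw [hdig i hi, haval i, hRHS]
      have h2 := hstep i
      omega
    · -- i ∉ Υ
      rintro i hi hnot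
      rw [hdig i hi, haval i, hfloor']
      have hxy : t₂ * (i + 1) / m = t₂ * i / m := by
        by_contra hne
        have hlt : t₂ * i / m < t₂ * (i + 1) / m := lt_of_le_of_ne (hmono2 i) (Ne.symm hne)
        apply hnot
        have hub : t₂ * (i + 1) / m ≤ t₂ := by
          calc t₂ * (i + 1) / m ≤ t₂ * m / m :=
                Nat.div_le_div_right (Nat.mul_le_mul_left _ (by omega))
            _ = t₂ := Nat.mul_div_cancel t₂ hm0
        have hc1 : t₂ * i < m * (t₂ * i / m + 1) := by
          conv_rhs => rw [Nat.mul_comm]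
          exact (Nat.div_lt_iff_lt_mul hm0).mp (Nat.lt_succ_self _)
        have hc2 : m * (t₂ * i / m + 1) ≤ t₂ * (i + 1) := by
          conv_lhs => rw [Nat.mul_comm]
          exact (Nat.le_div_iff_mul_le hm0).mp hlt
        have hpos : 1 ≤ m * (t₂ * i / m + 1) := Nat.mul_pos hm0 (Nat.succ_pos _)
        have hceq : (m * (t₂ * i / m + 1) + t₂ - 1) / t₂ = i + 1 := by
          rw [ceil_succ_iff' ht₂pos hpos]; exact ⟨hc1, hc2⟩
        refine ⟨t₂ * i / m + 1, Nat.succ_le_succ (Nat.zero_le _), ?_, ?_⟩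
        · exact Nat.succ_le_of_lt (lt_of_lt_of_le hlt hub)
        · rw [hceq]
          omega
      rw [hxy]
      omega
    · -- sum of digits
      rw [Finset.sum_congr rfl (fun i hi => hdig i (Finset.mem_range.mp hi))]
      have hsum : (∑ i ∈ Finset.range m, a i) = N * m / m - N * 0 / m :=
        telescope_aux' (fun i => N * i / m) hmonoN m
      rw [hsum, Nat.mul_div_cancel N hm0]
      simp
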